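/- arXiv:2002.02485 — 7 statements merged into one kernel-verified Lean document; each statement's English description precedes it below -/
import Mathlib

section
/- Let G be a topological group generated by a compact symmetric subset Q with 1 ∈ Q, and let |·|_Q be the associated word length. Let π be a unitary representation of G on a complex Hilbert space H, and let b : G → H be a 1-cocycle over π that is an almost coboundary. Then b has sublinear growth with respect to |·|_Q. -/
open MeasureTheory Filter Topology
open scoped Pointwise

/-- The word length of `g` with respect to a generating set `Q` (symmetric, containing `1`):
the least `n` such that `g` is a product of `n` elements of `Q`. -/
noncomputable def wordLength {G : Type*} [Group G] (Q : Set G) (g : G) : ℕ :=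
  sInf {n : ℕ | g ∈ Q ^ n}

/-- A map `b : G → H` into a normed space has sublinear growth with respect to the word
length `|·|_Q` if for every `ε > 0` there is `N` with `‖b g‖ < ε * |g|_Q` whenever `|g|_Q > N`. -/
def HasSublinearGrowth {G : Type*} [Group G] {H : Type*} [NormedAddCommGroup H]
    (Q : Set G) (b : G → H) : Prop :=
  ∀ ε : ℝ, 0 < ε → ∃ N : ℕ, ∀ g : G, N < wordLength Q g →
    ‖b g‖ < ε * (wordLength Q g : ℝ)

/-- `b` is an almost coboundary over `π`: it lies in the closure of the set of coboundaries
`g ↦ π g v - v` in the topology of uniform convergence on compact sets. -/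
def IsAlmostCoboundary {G : Type*} [Group G] [TopologicalSpace G]
    {H : Type*} [NormedAddCommGroup H] [InnerProductSpace ℂ H]
    (π : G →* (H ≃ₗᵢ[ℂ] H)) (b : G → H) : Prop :=
  ∀ K : Set G, IsCompact K → ∀ ε : ℝ, 0 < ε → ∃ v : H,
    ∀ g ∈ K, ‖b g - (π g v - v)‖ < ε

/-- An almost coboundary 1-cocycle over a unitary representation of a compactly generated
topological group has sublinear growth. -/
theorem almostCoboundary_hasSublinearGrowth
    {G : Type*} [Group G] [TopologicalSpace G] [IsTopologicalGroup G]
    (Q : Set G) (hQcomp : IsCompact Q) (hQsymm : Q⁻¹ = Q) (hQone : (1 : G) ∈ Q)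
    (hQgen : Subgroup.closure Q = ⊤)
    {H : Type*} [NormedAddCommGroup H] [InnerProductSpace ℂ H] [CompleteSpace H]
    (π : G →* (H ≃ₗᵢ[ℂ] H)) (hπ : ∀ v : H, Continuous fun g : G => π g v)
    (b : G → H) (hbcont : Continuous b)
    (hbcoc : ∀ g h : G, b (g * h) = b g + π g (b h))
    (halmost : IsAlmostCoboundary π b) :
    HasSublinearGrowth Q b := by
  intro ε hε
  -- choose v approximating b on Q within ε/2
  obtain ⟨v, hv⟩ := halmost Q hQcomp (ε / 2) (by linarith)
  -- every g lies in some Q^n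
  have hmem : ∀ g : G, ∃ n : ℕ, g ∈ Q ^ n := by
    intro g
    have hg : g ∈ Subgroup.closure Q := hQgen ▸ Subgroup.mem_top g
    refine Subgroup.closure_induction (fun x hx => ⟨1, by simpa using hx⟩)
      ⟨0, by simp⟩ ?_ ?_ hg
    · rintro x y _ _ ⟨m, hm⟩ ⟨k, hk⟩
      exact ⟨m + k, by rw [pow_add]; exact Set.mul_mem_mul hm hk⟩
    · rintro x _ ⟨m, hm⟩
      refine ⟨m, ?_⟩
      rw [← hQsymm, inv_pow]
      exact Set.inv_mem_inv.mpr hm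
  have hb1 : b 1 = 0 := by
    have := hbcoc 1 1
    simpa using this
  -- key estimate by induction on n
  have key : ∀ n : ℕ, ∀ g ∈ Q ^ n, ‖b g - (π g v - v)‖ ≤ n * (ε / 2) := by
    intro n
    induction n with
    | zero =>
      intro g hg
      simp only [pow_zero, Set.mem_one] at hg
      subst hg
      simp [hb1]
    | succ n ih =>
      intro g hg
      rw [pow_succ] at hg
      obtain ⟨h, hh, q, hq, rfl⟩ := hg
      have eq1 : b (h * q) - (π (h * q) v - v)
          = (b h - (π h v - v)) + π h (b q - (π q v - v)) := by
        rw [hbcoc h q, map_mul π]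
        have : (π h * π q) v = π h (π q v) := rfl
        rw [this]
        simp only [map_sub]
        abel
      calc ‖b (h * q) - (π (h * q) v - v)‖
          ≤ ‖b h - (π h v - v)‖ + ‖π h (b q - (π q v - v))‖ := by
            rw [eq1]; exact norm_add_le _ _
        _ = ‖b h - (π h v - v)‖ + ‖b q - (π q v - v)‖ := by
            rw [(π h).norm_map]
        _ ≤ n * (ε / 2) + ε / 2 := by
            exact add_le_add (ih h hh) (le_of_lt (hv q hq))
        _ = (n + 1 : ℕ) * (ε / 2) := by push_cast; ring
  -- choose N
  refine ⟨⌈4 * ‖v‖ / ε⌉₊, fun g hg => ?_⟩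
  set n := wordLength Q g with hn
  have hgn : g ∈ Q ^ n := Nat.sInf_mem (hmem g)
  have h1 : ‖b g‖ ≤ 2 * ‖v‖ + n * (ε / 2) := by
    calc ‖b g‖ = ‖(b g - (π g v - v)) + (π g v - v)‖ := by congr 1; abel
      _ ≤ ‖b g - (π g v - v)‖ + ‖π g v - v‖ := norm_add_le _ _
      _ ≤ n * (ε / 2) + (‖π g v‖ + ‖v‖) := by
          exact add_le_add (key n g hgn) (norm_sub_le _ _)
      _ = n * (ε / 2) + (‖v‖ + ‖v‖) := by rw [(π g).norm_map]
      _ = 2 * ‖v‖ + n * (ε / 2) := by ring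
  have hNn : (4 * ‖v‖ / ε : ℝ) < n := by
    calc (4 * ‖v‖ / ε : ℝ) ≤ ⌈4 * ‖v‖ / ε⌉₊ := Nat.le_ceil _
      _ < n := by exact_mod_cast hg
  have : 2 * ‖v‖ < n * (ε / 2) := by
    rw [div_lt_iff₀ hε] at hNn
    nlinarith
  calc ‖b g‖ ≤ 2 * ‖v‖ + n * (ε / 2) := h1
    _ < n * (ε / 2) + n * (ε / 2) := by linarith
    _ = ε * n := by ring
end

section
/- Let G be a topological group generated by a compact symmetric subset Q with 1 ∈ Q, and let |·|_Q be the associated word length. Let π be a unitary representation of G on a complex Hilbert space H, and let b, b' : G → H be 1-cocycles over π such that b has sublinear growth with respect to |·|_Q and the difference g ↦ b'(g) − b(g) is an almost coboundary. Then b' has sublinear growth with respect to |·|_Q. -/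
open MeasureTheory Filter Topology
open scoped Pointwise

private lemma prod_mem_pow {G : Type*} [Group G] (Q : Set G) :
    ∀ l : List G, (∀ y ∈ l, y ∈ Q) → l.prod ∈ Q ^ l.length := by
  intro l
  induction l with
  | nil => intro _; simp [Set.mem_one]
  | cons a t ih =>
      intro h
      rw [List.prod_cons, List.length_cons, pow_succ']
      exact Set.mul_mem_mul (h a (by simp)) (ih fun y hy => h y (by simp [hy]))

private lemma mem_pow_wordLength {G : Type*} [Group G] (Q : Set G)
    (hQsymm : Q⁻¹ = Q) (hQgen : Subgroup.closure Q = ⊤) (g : G) :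
    g ∈ Q ^ wordLength Q g := by
  have hg : g ∈ Submonoid.closure Q := by
    have h0 : g ∈ (Subgroup.closure Q).toSubmonoid := hQgen ▸ Subgroup.mem_top g
    rwa [Subgroup.closure_toSubmonoid, hQsymm, Set.union_self] at h0
  obtain ⟨l, hl', hprod⟩ := Submonoid.exists_list_of_mem_closure hg
  have : l.length ∈ {n : ℕ | g ∈ Q ^ n} := by
    simpa [Set.mem_setOf_eq, hprod] using prod_mem_pow Q l hl'
  exact Nat.sInf_mem ⟨l.length, this⟩

private lemma norm_cocycle_le {G : Type*} [Group G]
    {H : Type*} [NormedAddCommGroup H] [InnerProductSpace ℂ H]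
    (π : G →* (H ≃ₗᵢ[ℂ] H)) (d : G → H)
    (hd : ∀ g h : G, d (g * h) = d g + π g (d h))
    (Q : Set G) (M : ℝ) (hM : ∀ q ∈ Q, ‖d q‖ ≤ M) :
    ∀ n : ℕ, ∀ g ∈ Q ^ n, ‖d g‖ ≤ n * M := by
  have hd1 : d 1 = 0 := by
    have h := hd 1 1
    rw [mul_one, map_one] at h
    simpa using h
  intro n
  induction n with
  | zero =>
      intro g hg
      rw [pow_zero, Set.mem_one] at hg
      simp [hg, hd1]
  | succ n ih =>
      intro g hg
      rw [pow_succ] at hg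
      obtain ⟨a, ha, q, hq, rfl⟩ := hg
      calc ‖d (a * q)‖ = ‖d a + π a (d q)‖ := by rw [hd]
        _ ≤ ‖d a‖ + ‖π a (d q)‖ := norm_add_le _ _
        _ = ‖d a‖ + ‖d q‖ := by rw [LinearIsometryEquiv.norm_map]
        _ ≤ n * M + M := add_le_add (ih a ha) (hM q hq)
        _ = (n + 1 : ℕ) * M := by push_cast; ring

/-- If `b` has sublinear growth and `b' - b` is an almost coboundary, then the 1-cocycle `b'`
has sublinear growth. -/
theorem hasSublinearGrowth_of_almostCohomologous
    {G : Type*} [Group G] [TopologicalSpace G] [IsTopologicalGroup G]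
    (Q : Set G) (hQcomp : IsCompact Q) (hQsymm : Q⁻¹ = Q) (hQone : (1 : G) ∈ Q)
    (hQgen : Subgroup.closure Q = ⊤)
    {H : Type*} [NormedAddCommGroup H] [InnerProductSpace ℂ H] [CompleteSpace H]
    (π : G →* (H ≃ₗᵢ[ℂ] H)) (hπ : ∀ v : H, Continuous fun g : G => π g v)
    (b b' : G → H) (hbcont : Continuous b) (hb'cont : Continuous b')
    (hbcoc : ∀ g h : G, b (g * h) = b g + π g (b h))
    (hb'coc : ∀ g h : G, b' (g * h) = b' g + π g (b' h))
    (hbsub : HasSublinearGrowth Q b)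
    (hdiff : IsAlmostCoboundary π fun g => b' g - b g) :
    HasSublinearGrowth Q b' := by
  -- `c := b' - b` is a cocycle over `π`.
  set c : G → H := fun g => b' g - b g with hc
  have hccoc : ∀ g h : G, c (g * h) = c g + π g (c h) := by
    intro g h
    simp only [hc, hb'coc, hbcoc, map_sub]
    abel
  -- `c` has sublinear growth.
  have hcsub : HasSublinearGrowth Q c := by
    intro ε hε
    obtain ⟨v, hv⟩ := hdiff Q hQcomp (ε / 2) (by linarith)
    set d : G → H := fun g => c g - (π g v - v) with hdd
    have hdcoc : ∀ g h : G, d (g * h) = d g + π g (d h) := by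
      intro g h
      simp only [hdd, hccoc, map_sub, map_mul, LinearIsometryEquiv.coe_mul,
        Function.comp_apply]
      abel
    have hdQ : ∀ q ∈ Q, ‖d q‖ ≤ ε / 2 := fun q hq => (hv q hq).le
    refine ⟨Nat.ceil (4 * ‖v‖ / ε), fun g hg => ?_⟩
    set n := wordLength Q g with hn
    have hmem : g ∈ Q ^ n := mem_pow_wordLength Q hQsymm hQgen g
    have hdg : ‖d g‖ ≤ n * (ε / 2) := norm_cocycle_le π d hdcoc Q (ε / 2) hdQ n g hmem
    have hcg : ‖c g‖ ≤ n * (ε / 2) + 2 * ‖v‖ := by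
      have : ‖c g‖ ≤ ‖d g‖ + ‖π g v - v‖ := by
        have h : c g = d g + (π g v - v) := (sub_add_cancel (c g) _).symm
        rw [h]; exact norm_add_le _ _
      have h2 : ‖π g v - v‖ ≤ 2 * ‖v‖ := by
        calc ‖π g v - v‖ ≤ ‖π g v‖ + ‖v‖ := norm_sub_le _ _
          _ = 2 * ‖v‖ := by rw [LinearIsometryEquiv.norm_map]; ring
      linarith
    have hnlt : 4 * ‖v‖ / ε < (n : ℝ) := by
      calc 4 * ‖v‖ / ε ≤ (Nat.ceil (4 * ‖v‖ / ε) : ℝ) := Nat.le_ceil _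
        _ < n := by exact_mod_cast hg
    have : 2 * ‖v‖ < (n : ℝ) * (ε / 2) := by
      rw [div_lt_iff₀ hε] at hnlt
      nlinarith
    calc ‖c g‖ ≤ n * (ε / 2) + 2 * ‖v‖ := hcg
      _ < n * (ε / 2) + n * (ε / 2) := by linarith
      _ = ε * n := by ring
  -- combine
  intro ε hε
  obtain ⟨N1, hN1⟩ := hbsub (ε / 2) (by linarith)
  obtain ⟨N2, hN2⟩ := hcsub (ε / 2) (by linarith)
  refine ⟨max N1 N2, fun g hg => ?_⟩
  have h1 := hN1 g (lt_of_le_of_lt (le_max_left _ _) hg)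
  have h2 := hN2 g (lt_of_le_of_lt (le_max_right _ _) hg)
  have : b' g = b g + c g := by simp [hc]
  calc ‖b' g‖ = ‖b g + c g‖ := by rw [this]
    _ ≤ ‖b g‖ + ‖c g‖ := norm_add_le _ _
    _ < ε / 2 * wordLength Q g + ε / 2 * wordLength Q g := add_lt_add h1 h2
    _ = ε * wordLength Q g := by ring
end

section
/- Let G be a locally compact second-countable Hausdorff topological group acting measurably on a standard Borel probability space (S, μ) by measure-preserving transformations. Let α : G × S → ℝ be a jointly measurable strict cocycle such that α(g, ·) ∈ L²(S, μ) for every g ∈ G. Let π be the Koopman representation of G on L²(S, μ; ℝ), given by (π(g)f)(x) = f(g⁻¹·x) (each π(g) is a linear isometric isomorphism since the action preserves μ). Then the map b : G → L²(S, μ; ℝ) defined by b(g) = (the class of) x ↦ α(g⁻¹, x) satisfies b(gh) = b(g) + π(g)(b(h)) for all g, h ∈ G, and b is continuous; that is, b is a 1-cocycle over π. -/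
open MeasureTheory Filter Topology
open scoped ENNReal NNReal

set_option synthInstance.maxHeartbeats 1000000 in
set_option maxHeartbeats 1000000 in
/-- Let a locally compact second-countable Hausdorff group `G` act measurably and
measure-preservingly on a standard Borel probability space `(S, μ)`, and let
`α : G × S → ℝ` be a jointly measurable strict cocycle with `α (g, ·) ∈ L²(μ)` for every `g`.
Then `b : G → L²(S, μ; ℝ)`, `b g = [x ↦ α (g⁻¹, x)]`, satisfies the 1-cocycle identity
`b (g h) = b g + π g (b h)` over the Koopman representation `π g = (· ∘ (g⁻¹ • ·))`,
and `b` is continuous. -/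
theorem koopman_cocycle_of_L2_cocycle
    {G : Type*} [Group G] [TopologicalSpace G] [IsTopologicalGroup G]
    [LocallyCompactSpace G] [SecondCountableTopology G] [T2Space G]
    [MeasurableSpace G] [BorelSpace G]
    {S : Type*} [MeasurableSpace S] [StandardBorelSpace S]
    (μ : Measure S) [IsProbabilityMeasure μ]
    [MulAction G S]
    (hact : Measurable fun p : G × S => p.1 • p.2)
    (hpres : ∀ g : G, MeasurePreserving (fun x : S => g • x) μ μ)
    (α : G → S → ℝ)
    (hαmeas : Measurable fun p : G × S => α p.1 p.2)
    (hαcoc : ∀ g h : G, ∀ x : S, α (g * h) x = α g (h • x) + α h x)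
    (hL2 : ∀ g : G, MemLp (α g) 2 μ) :
    (∀ g h : G,
        (hL2 (g * h)⁻¹).toLp (α (g * h)⁻¹) =
          (hL2 g⁻¹).toLp (α g⁻¹) +
            Lp.compMeasurePreserving (fun x : S => g⁻¹ • x) (hpres g⁻¹)
              ((hL2 h⁻¹).toLp (α h⁻¹))) ∧
      Continuous fun g : G => (hL2 g⁻¹).toLp (α g⁻¹) := by
  -- key pointwise identity : α a x - α b x = α (a * b⁻¹) (b • x)
  have hkey : ∀ a b : G, ∀ x : S, α a x - α b x = α (a * b⁻¹) (b • x) := by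
    intro a b x
    have h := hαcoc (a * b⁻¹) b x
    rw [inv_mul_cancel_right] at h
    linarith
  set B : G → Lp ℝ 2 μ := fun g => (hL2 g).toLp (α g) with hBdef
  -- the distance between `B a` and `B b` only depends on `a * b⁻¹`
  have hdist : ∀ a b : G, dist (B a) (B b) = (eLpNorm (α (a * b⁻¹)) 2 μ).toReal := by
    intro a b
    rw [Lp.dist_def]
    congr 1
    have h1 : (⇑(B a) - ⇑(B b)) =ᵐ[μ] (α (a * b⁻¹) ∘ fun x : S => b • x) := by
      filter_upwards [(hL2 a).coeFn_toLp, (hL2 b).coeFn_toLp] with x h1 h2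
      simp only [Pi.sub_apply, hBdef, h1, h2, Function.comp_apply]
      exact hkey a b x
    rw [eLpNorm_congr_ae h1]
    exact eLpNorm_comp_measurePreserving (hL2 (a * b⁻¹)).aestronglyMeasurable (hpres b)
  constructor
  · -- the cocycle identity
    intro g h
    apply Lp.ext
    have h3 := Lp.coeFn_compMeasurePreserving ((hL2 h⁻¹).toLp (α h⁻¹)) (hpres g⁻¹)
    have h4 : (⇑((hL2 h⁻¹).toLp (α h⁻¹)) ∘ fun x : S => g⁻¹ • x)
        =ᵐ[μ] (α h⁻¹ ∘ fun x : S => g⁻¹ • x) :=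
      (hpres g⁻¹).quasiMeasurePreserving.ae_eq_comp (hL2 h⁻¹).coeFn_toLp
    have h5 := Lp.coeFn_add ((hL2 g⁻¹).toLp (α g⁻¹))
      (Lp.compMeasurePreserving (fun x : S => g⁻¹ • x) (hpres g⁻¹) ((hL2 h⁻¹).toLp (α h⁻¹)))
    filter_upwards [(hL2 (g * h)⁻¹).coeFn_toLp, (hL2 g⁻¹).coeFn_toLp, h3.trans h4, h5]
      with x e1 e2 e3 e5
    rw [e1, e5, Pi.add_apply, e2, e3]
    simp only [Function.comp_apply]
    rw [mul_inv_rev, hαcoc h⁻¹ g⁻¹ x]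
    ring
  · -- continuity
    -- measurability of `g ↦ dist (B g) c` for any fixed `c`
    have hmeasdist : ∀ c : Lp ℝ 2 μ, Measurable fun g : G => dist (B g) c := by
      intro c
      obtain ⟨c', hc'meas, hc'ae⟩ : ∃ c' : S → ℝ, Measurable c' ∧ ⇑c =ᵐ[μ] c' := by
        rcases (Lp.aestronglyMeasurable c).aemeasurable with ⟨c', hm, hae⟩
        exact ⟨c', hm, hae⟩
      have hrep : ∀ g : G, dist (B g) c
          = ((∫⁻ x, (‖α g x - c' x‖₊ : ℝ≥0∞) ^ (2 : ℝ) ∂μ) ^ (1 / (2 : ℝ))).toReal := by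
        intro g
        rw [Lp.dist_def]
        have h1 : (⇑(B g) - ⇑c) =ᵐ[μ] fun x => α g x - c' x := by
          filter_upwards [(hL2 g).coeFn_toLp, hc'ae] with x h1 h2
          simp [hBdef, h1, h2]
        rw [eLpNorm_congr_ae h1,
          eLpNorm_eq_lintegral_rpow_enorm_toReal two_ne_zero ENNReal.ofNat_ne_top]
        norm_num
        simp only [enorm_eq_nnnorm]
      simp_rw [hrep]
      have h2 : Measurable fun g : G => ∫⁻ x, (‖α g x - c' x‖₊ : ℝ≥0∞) ^ (2 : ℝ) ∂μ := by
        apply Measurable.lintegral_prod_right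
        exact ((hαmeas.sub (hc'meas.comp measurable_snd)).nnnorm.coe_nnreal_ennreal).pow
          measurable_const
      exact ENNReal.measurable_toReal.comp (h2.pow measurable_const)
    -- the norm of `B s` is small for `s` near `1`
    have hsmall : ∀ ε : ℝ, 0 < ε →
        ∀ᶠ s in 𝓝 (1 : G), (eLpNorm (α s) 2 μ).toReal < ε := by
      intro ε hε
      haveI : Fact ((2 : ℝ≥0∞) ≠ ∞) := ⟨ENNReal.ofNat_ne_top⟩
      haveI : TopologicalSpace.SeparableSpace (Lp ℝ 2 μ) :=
        TopologicalSpace.SecondCountableTopology.to_separableSpace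
      set ν : Measure G := MeasureTheory.Measure.haar with hν
      obtain ⟨D, hDc, hDd⟩ := TopologicalSpace.exists_countable_dense (Lp ℝ 2 μ)
      have hcover : (Set.univ : Set G) ⊆ ⋃ c ∈ D, {g : G | dist (B g) c < ε / 2} := by
        intro g _
        obtain ⟨c, hcD, hlt⟩ := hDd.exists_dist_lt (B g) (by positivity : (0:ℝ) < ε / 2)
        exact Set.mem_biUnion hcD hlt
      have hex : ∃ c ∈ D, ν {g : G | dist (B g) c < ε / 2} ≠ 0 := by
        by_contra hcon
        push_neg at hcon
        have h0 : ν (⋃ c ∈ D, {g : G | dist (B g) c < ε / 2}) = 0 :=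
          (measure_biUnion_null_iff hDc).2 hcon
        have : ν (Set.univ : Set G) = 0 := measure_mono_null hcover h0
        exact (IsOpen.measure_ne_zero ν isOpen_univ Set.univ_nonempty) this
      obtain ⟨c, hcD, hcpos⟩ := hex
      have hAmeas : MeasurableSet {g : G | dist (B g) c < ε / 2} :=
        measurableSet_lt (hmeasdist c) measurable_const
      have hnhds := Measure.div_mem_nhds_one_of_haar_pos ν {g : G | dist (B g) c < ε / 2} hAmeas
        (pos_iff_ne_zero.2 hcpos)
      filter_upwards [hnhds] with s hs
      obtain ⟨a, ha, b, hb, rfl⟩ := hs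
      have habd : dist (B a) (B b) < ε :=
        calc dist (B a) (B b) ≤ dist (B a) c + dist (B b) c := dist_triangle_right _ _ _
          _ < ε / 2 + ε / 2 := add_lt_add ha hb
          _ = ε := by ring
      calc (eLpNorm (α (a / b)) 2 μ).toReal
          = (eLpNorm (α (a * b⁻¹)) 2 μ).toReal := by rw [div_eq_mul_inv]
        _ = dist (B a) (B b) := (hdist a b).symm
        _ < ε := habd
    -- conclude
    rw [continuous_iff_continuousAt]
    intro g₀
    have hmap : Tendsto (fun g : G => g⁻¹ * g₀) (𝓝 g₀) (𝓝 (1 : G)) := by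
      have h := ((continuous_inv.mul continuous_const :
        Continuous fun g : G => g⁻¹ * g₀)).tendsto g₀
      have h' : Tendsto (fun g : G => g⁻¹ * g₀) (𝓝 g₀) (𝓝 (g₀⁻¹ * g₀)) := h
      rw [inv_mul_cancel] at h'
      exact h'
    rw [ContinuousAt, Metric.tendsto_nhds]
    intro ε hε
    filter_upwards [hmap.eventually (hsmall ε hε)] with g hg
    have : dist (B g⁻¹) (B g₀⁻¹) = (eLpNorm (α (g⁻¹ * g₀)) 2 μ).toReal := by
      rw [hdist g⁻¹ g₀⁻¹, inv_inv]
    calc dist ((hL2 g⁻¹).toLp (α g⁻¹)) ((hL2 g₀⁻¹).toLp (α g₀⁻¹))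
        = dist (B g⁻¹) (B g₀⁻¹) := rfl
      _ = (eLpNorm (α (g⁻¹ * g₀)) 2 μ).toReal := this
      _ < ε := hg
end

section
/- Let G be a Hausdorff topological group generated by a compact symmetric subset Q with 1 ∈ Q, and let Γ ≤ G be a closed discrete subgroup generated by a finite symmetric subset W ⊆ Q with 1 ∈ W. Let π be a unitary representation of G on a complex Hilbert space H and let c : G → H be a 1-cocycle over π with sublinear growth with respect to |·|_Q. Then the restriction c|_Γ : Γ → H, a 1-cocycle over π|_Γ, has sublinear growth with respect to the word length |·|_W on Γ. -/
open MeasureTheory Filter Topology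
open scoped Pointwise

/-- If a 1-cocycle `c` over a unitary representation of a compactly generated group `G` has
sublinear growth with respect to `|·|_Q`, then its restriction to a closed discrete subgroup
`Γ` generated by a finite symmetric set `W ⊆ Q` has sublinear growth with respect to
`|·|_W`. -/
theorem restriction_to_lattice_hasSublinearGrowth
    {G : Type*} [Group G] [TopologicalSpace G] [IsTopologicalGroup G] [T2Space G]
    (Q : Set G) (hQcomp : IsCompact Q) (hQsymm : Q⁻¹ = Q) (hQone : (1 : G) ∈ Q)
    (hQgen : Subgroup.closure Q = ⊤)
    (Γ : Subgroup G) (hΓclosed : IsClosed (Γ : Set G)) (hΓdisc : DiscreteTopology Γ)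
    (W : Set Γ) (hWfin : W.Finite) (hWsymm : W⁻¹ = W) (hWone : (1 : Γ) ∈ W)
    (hWgen : Subgroup.closure W = ⊤)
    (hWQ : ((↑) : Γ → G) '' W ⊆ Q)
    {H : Type*} [NormedAddCommGroup H] [InnerProductSpace ℂ H] [CompleteSpace H]
    (π : G →* (H ≃ₗᵢ[ℂ] H)) (hπ : ∀ v : H, Continuous fun g : G => π g v)
    (c : G → H) (hccont : Continuous c)
    (hccoc : ∀ g h : G, c (g * h) = c g + π g (c h))
    (hcsub : HasSublinearGrowth Q c) :
    HasSublinearGrowth W (fun γ : Γ => c ↑γ) := by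
  intro ε hε
  obtain ⟨N₀, hN₀⟩ := hcsub ε hε
  -- Q ^ N₀ is compact
  have hKcomp : ∀ n : ℕ, IsCompact (Q ^ n) := by
    intro n
    induction n with
    | zero => rw [pow_zero, ← Set.singleton_one]; exact isCompact_singleton
    | succ n ih => rw [pow_succ]; exact ih.mul hQcomp
  -- the set of lattice points in Q ^ N₀ is finite
  have hSfin : Set.Finite ((Γ : Set G) ∩ Q ^ N₀) := by
    refine IsCompact.finite (IsCompact.of_isClosed_subset (hKcomp N₀) (hΓclosed.inter (hKcomp N₀).isClosed) Set.inter_subset_right) ?_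
    exact isDiscrete_iff_discreteTopology.mpr <| DiscreteTopology.of_subset hΓdisc Set.inter_subset_left
  -- a bound on ‖c g‖ on this finite set
  obtain ⟨C, hC0, hC⟩ : ∃ C : ℝ, 0 ≤ C ∧ ∀ g ∈ (Γ : Set G) ∩ Q ^ N₀, ‖c g‖ ≤ C := by
    obtain ⟨C, hC⟩ := (hSfin.image (fun g => ‖c g‖)).bddAbove
    exact ⟨max C 0, le_max_right _ _, fun g hg =>
      le_trans (hC (Set.mem_image_of_mem _ hg)) (le_max_left _ _)⟩
  refine ⟨max N₀ ⌈C / ε⌉₊, fun γ hγ => ?_⟩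
  set m := wordLength W γ with hm
  have hmpos : 0 < m := lt_of_le_of_lt (Nat.zero_le _) hγ
  have hmem : γ ∈ W ^ m := by
    have hne : {n : ℕ | γ ∈ W ^ n}.Nonempty := by
      by_contra h
      rw [Set.not_nonempty_iff_eq_empty] at h
      simp [wordLength, h] at hm
      omega
    exact Nat.sInf_mem hne
  have hmemG : (γ : G) ∈ Q ^ m := by
    have := Set.image_pow (Γ.subtype) W m ▸ Set.mem_image_of_mem (Γ.subtype) hmem
    exact (Set.pow_subset_pow_left hWQ) this
  have hQle : wordLength Q (γ : G) ≤ m := Nat.sInf_le hmemG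
  rcases le_or_gt (wordLength Q (γ : G)) N₀ with hle | hlt
  · -- γ lies in Q ^ N₀, use the bound C
    have hmemQ : (γ : G) ∈ Q ^ (wordLength Q (γ : G)) := by
      unfold wordLength
      exact Nat.sInf_mem (Set.nonempty_of_mem (show m ∈ {n : ℕ | (γ : G) ∈ Q ^ n} from hmemG))
    have hγK : (γ : G) ∈ (Γ : Set G) ∩ Q ^ N₀ :=
      ⟨γ.2, Set.pow_subset_pow_right hQone hle hmemQ⟩
    have h1 : ‖c (γ : G)‖ ≤ C := hC _ hγK
    have h2 : (⌈C / ε⌉₊ : ℝ) < m := by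
      exact_mod_cast lt_of_le_of_lt (le_max_right N₀ _) hγ
    have : C / ε < m := lt_of_le_of_lt (Nat.le_ceil _) h2
    calc ‖c (γ : G)‖ ≤ C := h1
      _ < ε * m := by rw [← div_lt_iff₀' hε]; simpa [div_eq_mul_inv, mul_comm] using this
  · have := hN₀ (γ : G) hlt
    calc ‖c (γ : G)‖ < ε * (wordLength Q (γ : G) : ℝ) := this
      _ ≤ ε * m := by
          have : (wordLength Q (γ : G) : ℝ) ≤ m := by exact_mod_cast hQle
          nlinarith
end

section
/- Let G₁, …, Gₙ be topological groups, each Gᵢ generated by a compact symmetric subset Qᵢ with 1 ∈ Qᵢ; set G = G₁ × ⋯ × Gₙ and Q = Q₁ × ⋯ × Qₙ. Let π be a unitary representation of G on a complex Hilbert space H and let b : G → H be a 1-cocycle over π. Assume b = b₀ + b₁ + ⋯ + bₙ + b_r, where: b₀ is a 1-cocycle over π all of whose values are π(G)-invariant vectors; for each i, bᵢ = cᵢ ∘ prᵢ for some continuous map cᵢ : Gᵢ → H with sublinear growth with respect to |·|_{Qᵢ} (prᵢ : G → Gᵢ the projection); b_r is a 1-cocycle over π that is an almost coboundary; and G is a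 perfect group (G equals its own commutator subgroup). Then b has sublinear growth with respect to |·|_Q. -/
open MeasureTheory Filter Topology
open scoped Pointwise

lemma exists_pow_mem' {G : Type*} [Group G] {Q : Set G} (hsymm : Q⁻¹ = Q)
    (hgen : Subgroup.closure Q = ⊤) (g : G) : ∃ m : ℕ, g ∈ Q ^ m := by
  have hg : g ∈ Subgroup.closure Q := by rw [hgen]; trivial
  refine Subgroup.closure_induction (fun x hx => ⟨1, by simpa using hx⟩) ⟨0, by simp⟩
    (fun x y _ _ hx hy => ?_) (fun x _ hx => ?_) hg
  · obtain ⟨m, hm⟩ := hx; obtain ⟨k, hk⟩ := hy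
    exact ⟨m + k, by rw [pow_add]; exact Set.mul_mem_mul hm hk⟩
  · obtain ⟨m, hm⟩ := hx
    refine ⟨m, ?_⟩
    rw [← hsymm, inv_pow, Set.mem_inv, inv_inv]
    exact hm

lemma isCompact_pow' {G : Type*} [Monoid G] [TopologicalSpace G] [ContinuousMul G]
    {Q : Set G} (h : IsCompact Q) (m : ℕ) : IsCompact (Q ^ m) := by
  induction m with
  | zero => rw [pow_zero, ← Set.singleton_one]; exact isCompact_singleton
  | succ k ih => rw [pow_succ]; exact ih.mul h

lemma proj_mem_pow' {n : ℕ} {Gi : Fin n → Type*} [∀ i, Group (Gi i)]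
    (Qs : ∀ i, Set (Gi i)) :
    ∀ (m : ℕ) (g : ∀ i, Gi i), g ∈ (Set.univ.pi Qs) ^ m → ∀ i, g i ∈ Qs i ^ m := by
  intro m
  induction m with
  | zero =>
    intro g hg i
    rw [pow_zero] at hg ⊢
    rw [Set.mem_one] at hg ⊢
    rw [hg]; rfl
  | succ k ih =>
    intro g hg i
    rw [pow_succ] at hg
    obtain ⟨a, ha, q, hq, rfl⟩ := Set.mem_mul.mp hg
    rw [pow_succ]
    exact Set.mul_mem_mul (ih a ha i) (hq i (Set.mem_univ i))

lemma mem_pow_pi' {n : ℕ} {Gi : Fin n → Type*} [∀ i, Group (Gi i)]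
    (Qs : ∀ i, Set (Gi i)) :
    ∀ (m : ℕ) (g : ∀ i, Gi i), (∀ i, g i ∈ Qs i ^ m) → g ∈ (Set.univ.pi Qs) ^ m := by
  intro m
  induction m with
  | zero =>
    intro g hg
    rw [pow_zero, Set.mem_one]
    funext i
    have := hg i; rw [pow_zero, Set.mem_one] at this; exact this
  | succ k ih =>
    intro g hg
    have h' : ∀ i, ∃ x ∈ Qs i ^ k, ∃ y ∈ Qs i, x * y = g i := by
      intro i
      have := hg i; rw [pow_succ] at this
      exact Set.mem_mul.mp this
    choose a ha q hq hprod using h'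
    have hgeq : g = a * q := by funext i; exact (hprod i).symm
    rw [hgeq, pow_succ]
    exact Set.mul_mem_mul (ih a ha) (fun i _ => hq i)

/-- Let `G = G₁ × ⋯ × Gₙ` with compact symmetric generating sets `Qᵢ ∋ 1`, and suppose a
1-cocycle `b` over a unitary representation `π` of `G` decomposes as
`b = b₀ + b₁ + ⋯ + bₙ + b_r`, where `b₀` is a 1-cocycle with `π(G)`-invariant values,
`bᵢ = cᵢ ∘ prᵢ` with `cᵢ` continuous of sublinear growth with respect to `|·|_{Qᵢ}`, and
`b_r` is an almost-coboundary 1-cocycle. If `G` is perfect, then `b` has sublinear growth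
with respect to `Q = Q₁ × ⋯ × Qₙ`. -/
theorem sublinearGrowth_of_shalom_decomposition
    {n : ℕ} {Gi : Fin n → Type*} [∀ i, Group (Gi i)]
    [∀ i, TopologicalSpace (Gi i)] [∀ i, IsTopologicalGroup (Gi i)]
    (Qs : ∀ i, Set (Gi i))
    (hQcomp : ∀ i, IsCompact (Qs i)) (hQsymm : ∀ i, (Qs i)⁻¹ = Qs i)
    (hQone : ∀ i, (1 : Gi i) ∈ Qs i) (hQgen : ∀ i, Subgroup.closure (Qs i) = ⊤)
    {H : Type*} [NormedAddCommGroup H] [InnerProductSpace ℂ H] [CompleteSpace H]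
    (π : (∀ i, Gi i) →* (H ≃ₗᵢ[ℂ] H))
    (hπ : ∀ v : H, Continuous fun g : ∀ i, Gi i => π g v)
    (b b₀ br : (∀ i, Gi i) → H) (c : ∀ i, Gi i → H)
    (hbcont : Continuous b)
    (hbcoc : ∀ g h : ∀ i, Gi i, b (g * h) = b g + π g (b h))
    (hb₀cont : Continuous b₀)
    (hb₀coc : ∀ g h : ∀ i, Gi i, b₀ (g * h) = b₀ g + π g (b₀ h))
    (hb₀inv : ∀ g h : ∀ i, Gi i, π g (b₀ h) = b₀ h)
    (hccont : ∀ i, Continuous (c i))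
    (hcsub : ∀ i, HasSublinearGrowth (Qs i) (c i))
    (hbrcont : Continuous br)
    (hbrcoc : ∀ g h : ∀ i, Gi i, br (g * h) = br g + π g (br h))
    (hbralmost : IsAlmostCoboundary π br)
    (hperfect : commutator (∀ i, Gi i) = ⊤)
    (hdecomp : ∀ g : ∀ i, Gi i, b g = b₀ g + (∑ i, c i (g i)) + br g) :
    HasSublinearGrowth (Set.univ.pi Qs) b := by
  classical
  set Q : Set (∀ i, Gi i) := Set.univ.pi Qs with hQdef
  -- every element is a word
  have hex : ∀ g : ∀ i, Gi i, ∃ m : ℕ, g ∈ Q ^ m := by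
    intro g
    choose m hm using fun i => exists_pow_mem' (hQsymm i) (hQgen i) (g i)
    refine ⟨Finset.univ.sup m, mem_pow_pi' Qs _ g fun i => ?_⟩
    exact Set.pow_subset_pow_right (hQone i) (Finset.le_sup (Finset.mem_univ i)) (hm i)
  have hexi : ∀ (i) (x : Gi i), ∃ m : ℕ, x ∈ Qs i ^ m := fun i x =>
    exists_pow_mem' (hQsymm i) (hQgen i) x
  have hWL : ∀ g : ∀ i, Gi i, g ∈ Q ^ wordLength Q g := fun g => Nat.sInf_mem (hex g)
  have hWLi : ∀ (i) (x : Gi i), x ∈ Qs i ^ wordLength (Qs i) x := fun i x =>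
    Nat.sInf_mem (hexi i x)
  have hle : ∀ {i : Fin n} {x : Gi i} {m : ℕ}, x ∈ Qs i ^ m → wordLength (Qs i) x ≤ m :=
    fun h => Nat.sInf_le h
  have hproj : ∀ (g : ∀ i, Gi i) (i : Fin n), wordLength (Qs i) (g i) ≤ wordLength Q g :=
    fun g i => hle (proj_mem_pow' Qs _ g (hWL g) i)
  -- b₀ vanishes
  have hb₀hom : ∀ g h : ∀ i, Gi i, b₀ (g * h) = b₀ g + b₀ h := fun g h => by
    rw [hb₀coc, hb₀inv]
  have hb₀zero : ∀ g : ∀ i, Gi i, b₀ g = 0 := by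
    let f : (∀ i, Gi i) →* Multiplicative H :=
      MonoidHom.mk' (fun g => Multiplicative.ofAdd (b₀ g))
        (fun g h => by simp only [hb₀hom]; rfl)
    intro g
    have hg : g ∈ commutator (∀ i, Gi i) := by rw [hperfect]; trivial
    have := Abelianization.commutator_subset_ker f hg
    rw [MonoidHom.mem_ker] at this
    exact Multiplicative.ofAdd.injective this
  -- br cocycle basics
  have hbr1 : br 1 = 0 := by
    have h := hbrcoc 1 1
    simp only [one_mul, map_one, LinearIsometryEquiv.coe_one, id_eq] at h
    exact left_eq_add.mp h
  -- key cocycle growth estimate for br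
  have key : ∀ (v : H) (δ : ℝ), 0 ≤ δ → (∀ q ∈ Q, ‖br q - (π q v - v)‖ ≤ δ) →
      ∀ (m : ℕ) (g : ∀ i, Gi i), g ∈ Q ^ m → ‖br g - (π g v - v)‖ ≤ m * δ := by
    intro v δ hδ hQv m
    induction m with
    | zero =>
      intro g hg
      rw [pow_zero, Set.mem_one] at hg
      subst hg
      simp [hbr1]
    | succ k ih =>
      intro g hg
      rw [pow_succ] at hg
      obtain ⟨a, ha, q, hq, rfl⟩ := Set.mem_mul.mp hg
      have heq : br (a * q) - (π (a * q) v - v)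
          = (br a - (π a v - v)) + (π a) (br q - (π q v - v)) := by
        rw [hbrcoc, map_mul]
        simp only [LinearIsometryEquiv.coe_mul, Function.comp_apply, map_sub]
        abel
      calc ‖br (a * q) - (π (a * q) v - v)‖
          ≤ ‖br a - (π a v - v)‖ + ‖(π a) (br q - (π q v - v))‖ := by
            rw [heq]; exact norm_add_le _ _
        _ ≤ k * δ + δ := by
            rw [LinearIsometryEquiv.norm_map]
            exact add_le_add (ih a ha) (hQv q hq)
        _ = (k + 1 : ℕ) * δ := by push_cast; ring
  -- main argument
  intro ε hε
  have hn1 : (0 : ℝ) < (n : ℝ) + 1 := by positivity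
  set ε' : ℝ := ε / (2 * ((n : ℝ) + 1)) with hε'def
  have hε' : 0 < ε' := by positivity
  -- sublinear bounds for the cᵢ
  choose Nc hNc using fun i => hcsub i ε' hε'
  -- bounds on compact balls
  have hCbound : ∀ i : Fin n, ∃ C : ℝ, ∀ x ∈ Qs i ^ Nc i, ‖c i x‖ ≤ C := by
    intro i
    obtain ⟨C, hC⟩ := (isCompact_pow' (hQcomp i) (Nc i)).exists_bound_of_continuousOn
      ((hccont i).continuousOn)
    exact ⟨C, hC⟩
  choose C hC using hCbound
  -- almost coboundary bound
  have hQcompact : IsCompact Q := isCompact_univ_pi hQcomp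
  obtain ⟨v, hv⟩ := hbralmost Q hQcompact (ε / 4) (by positivity)
  have hbrbound : ∀ g : ∀ i, Gi i,
      ‖br g‖ ≤ (wordLength Q g : ℝ) * (ε / 4) + 2 * ‖v‖ := by
    intro g
    have h1 := key v (ε / 4) (by positivity) (fun q hq => (hv q hq).le)
      (wordLength Q g) g (hWL g)
    have h2 : ‖π g v - v‖ ≤ 2 * ‖v‖ := by
      calc ‖π g v - v‖ ≤ ‖π g v‖ + ‖v‖ := norm_sub_le _ _
        _ = 2 * ‖v‖ := by rw [LinearIsometryEquiv.norm_map]; ring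
    calc ‖br g‖ = ‖(br g - (π g v - v)) + (π g v - v)‖ := by rw [sub_add_cancel]
      _ ≤ ‖br g - (π g v - v)‖ + ‖π g v - v‖ := norm_add_le _ _
      _ ≤ (wordLength Q g : ℝ) * (ε / 4) + 2 * ‖v‖ := add_le_add h1 h2
  -- choose N
  set A : ℕ := Finset.univ.sup (fun i => max (Nc i) ⌈C i / ε'⌉₊) with hAdef
  set B : ℕ := ⌈2 * ‖v‖ / (ε / 4)⌉₊ with hBdef
  refine ⟨max A B, fun g hg => ?_⟩
  set L : ℝ := (wordLength Q g : ℝ) with hLdef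
  have hNA : A < wordLength Q g := lt_of_le_of_lt (le_max_left A B) hg
  have hNB : B < wordLength Q g := lt_of_le_of_lt (le_max_right A B) hg
  have hBL : (B : ℝ) < L := by rw [hLdef]; exact_mod_cast hNB
  have hAL : (A : ℝ) < L := by rw [hLdef]; exact_mod_cast hNA
  have hLpos : (0 : ℝ) < L := lt_of_le_of_lt (Nat.cast_nonneg B) hBL
  -- bound on br
  have hbr : ‖br g‖ < (ε / 2) * L := by
    have h1 := hbrbound g
    have h2 : 2 * ‖v‖ ≤ (ε / 4) * B := by
      rw [← div_le_iff₀' (by positivity : (0:ℝ) < ε / 4)]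
      exact Nat.le_ceil _
    have h3 : (ε / 4) * (B : ℝ) < (ε / 4) * L :=
      mul_lt_mul_of_pos_left hBL (by positivity)
    calc ‖br g‖ ≤ L * (ε / 4) + 2 * ‖v‖ := h1
      _ < L * (ε / 4) + (ε / 4) * L := by linarith
      _ = (ε / 2) * L := by ring
  -- bound on each cᵢ
  have hci : ∀ i : Fin n, ‖c i (g i)‖ ≤ ε' * L := by
    intro i
    rcases lt_or_ge (Nc i) (wordLength (Qs i) (g i)) with hcase | hcase
    · have := hNc i (g i) hcase
      refine this.le.trans ?_
      have : (wordLength (Qs i) (g i) : ℝ) ≤ L := by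
        rw [hLdef]; exact_mod_cast hproj g i
      exact mul_le_mul_of_nonneg_left this hε'.le
    · have hmem : g i ∈ Qs i ^ Nc i :=
        Set.pow_subset_pow_right (hQone i) hcase (hWLi i (g i))
      have h1 : ‖c i (g i)‖ ≤ C i := hC i _ hmem
      have h2 : C i ≤ ε' * (⌈C i / ε'⌉₊ : ℝ) := by
        rw [← div_le_iff₀' hε']
        exact Nat.le_ceil _
      have h3 : (⌈C i / ε'⌉₊ : ℝ) ≤ (A : ℝ) := by
        exact_mod_cast (le_max_right (Nc i) _).trans
          (Finset.le_sup (f := fun i => max (Nc i) ⌈C i / ε'⌉₊) (Finset.mem_univ i))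
      have h4 : ε' * (A : ℝ) ≤ ε' * L := mul_le_mul_of_nonneg_left hAL.le hε'.le
      calc ‖c i (g i)‖ ≤ C i := h1
        _ ≤ ε' * (⌈C i / ε'⌉₊ : ℝ) := h2
        _ ≤ ε' * (A : ℝ) := mul_le_mul_of_nonneg_left h3 hε'.le
        _ ≤ ε' * L := h4
  -- sum bound
  have hsum : ‖∑ i, c i (g i)‖ ≤ (ε / 2) * L := by
    calc ‖∑ i, c i (g i)‖ ≤ ∑ i, ‖c i (g i)‖ := norm_sum_le _ _
      _ ≤ ∑ _i : Fin n, ε' * L := Finset.sum_le_sum (fun i _ => hci i)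
      _ = (n : ℝ) * (ε' * L) := by rw [Finset.sum_const]; simp [mul_comm]
      _ ≤ (ε / 2) * L := by
          rw [hε'def]
          rw [show (n : ℝ) * (ε / (2 * ((n : ℝ) + 1)) * L) = (ε / 2) * L * ((n : ℝ) / ((n : ℝ) + 1)) by field_simp]
          have hfrac : (n : ℝ) / ((n : ℝ) + 1) ≤ 1 := by
            rw [div_le_one hn1]; linarith
          nlinarith [mul_pos (half_pos hε) hLpos]
  -- conclude
  rw [hdecomp g, hb₀zero g, zero_add]
  calc ‖(∑ i, c i (g i)) + br g‖ ≤ ‖∑ i, c i (g i)‖ + ‖br g‖ := norm_add_le _ _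
    _ < (ε / 2) * L + (ε / 2) * L := add_lt_add_of_le_of_lt hsum hbr
    _ = ε * L := by ring
end

section
/- Let Γ be a group generated by a finite symmetric subset W with 1 ∈ W, and let Γ' ≤ Γ be a finite-index subgroup generated by a finite symmetric subset W' with 1 ∈ W'. Let π be a unitary representation of Γ on a complex Hilbert space H (Γ discrete) and let b : Γ → H be a 1-cocycle over π. If the restriction b|_{Γ'} has sublinear growth with respect to the word length |·|_{W'} on Γ', then b has sublinear growth with respect to the word length |·|_W on Γ. -/
open scoped Pointwise

section Aux
variable {G : Type*} [Group G] {Q : Set G}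

lemma exists_mem_pow (hsymm : Q⁻¹ = Q) (hgen : Subgroup.closure Q = ⊤) (g : G) :
    ∃ n, g ∈ Q ^ n := by
  have hg : g ∈ Subgroup.closure Q := hgen ▸ Subgroup.mem_top g
  induction hg using Subgroup.closure_induction with
  | mem x hx => exact ⟨1, by simpa using hx⟩
  | one => exact ⟨0, by simp⟩
  | mul x y _ _ hx hy =>
      obtain ⟨m, hm⟩ := hx
      obtain ⟨n, hn⟩ := hy
      exact ⟨m + n, by rw [pow_add]; exact Set.mul_mem_mul hm hn⟩
  | inv x _ hx =>
      obtain ⟨n, hn⟩ := hx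
      refine ⟨n, ?_⟩
      have : x⁻¹ ∈ (Q ^ n)⁻¹ := by simpa using hn
      rwa [← inv_pow, hsymm] at this

lemma wordLength_mem_pow (hsymm : Q⁻¹ = Q) (hgen : Subgroup.closure Q = ⊤) (g : G) :
    g ∈ Q ^ wordLength Q g :=
  Nat.sInf_mem (exists_mem_pow hsymm hgen g)

lemma wordLength_le {g : G} {n : ℕ} (h : g ∈ Q ^ n) : wordLength Q g ≤ n :=
  Nat.sInf_le h

lemma wordLength_mul_le (hsymm : Q⁻¹ = Q) (hgen : Subgroup.closure Q = ⊤) (a c : G) :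
    wordLength Q (a * c) ≤ wordLength Q a + wordLength Q c := by
  apply wordLength_le
  rw [pow_add]
  exact Set.mul_mem_mul (wordLength_mem_pow hsymm hgen a) (wordLength_mem_pow hsymm hgen c)

lemma set_finite_pow {s : Set G} (hs : s.Finite) (n : ℕ) : (s ^ n).Finite := by
  induction n with
  | zero => simpa using Set.finite_one
  | succ k ih => rw [pow_succ]; exact ih.mul hs

end Aux

/-- If the restriction of a 1-cocycle `b` over a unitary representation of a finitely
generated group `Γ` to a finite-index subgroup `Γ'` has sublinear growth (with respect to a
finite symmetric generating set `W'` of `Γ'`), then `b` has sublinear growth with respect to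
a finite symmetric generating set `W` of `Γ`. -/
theorem sublinearGrowth_of_finiteIndex_restriction
    {Γ : Type*} [Group Γ]
    (W : Set Γ) (hWfin : W.Finite) (hWsymm : W⁻¹ = W) (hWone : (1 : Γ) ∈ W)
    (hWgen : Subgroup.closure W = ⊤)
    (Γ' : Subgroup Γ) (hΓ'fi : Γ'.FiniteIndex)
    (W' : Set Γ') (hW'fin : W'.Finite) (hW'symm : W'⁻¹ = W') (hW'one : (1 : Γ') ∈ W')
    (hW'gen : Subgroup.closure W' = ⊤)
    {H : Type*} [NormedAddCommGroup H] [InnerProductSpace ℂ H] [CompleteSpace H]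
    (π : Γ →* (H ≃ₗᵢ[ℂ] H)) (b : Γ → H)
    (hbcoc : ∀ g h : Γ, b (g * h) = b g + π g (b h))
    (hsub' : HasSublinearGrowth W' (fun γ : Γ' => b ↑γ)) :
    HasSublinearGrowth W b := by
  intro ε hε
  haveI := hΓ'fi
  haveI : Fintype (Γ ⧸ Γ') := Fintype.ofFinite _
  set r : Γ → Γ := fun g => (QuotientGroup.mk g : Γ ⧸ Γ').out with hr
  have hmem : ∀ g : Γ, (r g)⁻¹ * g ∈ Γ' := fun g =>
    QuotientGroup.eq.mp (QuotientGroup.out_eq' (QuotientGroup.mk g))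
  set γm : Γ → Γ' := fun g => ⟨(r g)⁻¹ * g, hmem g⟩ with hγm
  have hfac : ∀ g : Γ, g = r g * (γm g : Γ) := fun g => by simp [hγm]
  set M : ℕ := (hWfin.toFinset ×ˢ (Finset.univ : Finset (Γ ⧸ Γ'))).sup
      (fun p => wordLength W' (γm (p.1 * p.2.out))) with hM
  set M0 : ℕ := wordLength W' (γm 1) with hM0
  -- key Schreier-type estimate
  have key : ∀ n : ℕ, ∀ g ∈ W ^ n, wordLength W' (γm g) ≤ M * n + M0 := by
    intro n
    induction n with
    | zero => intro g hg; rw [pow_zero, Set.mem_one] at hg; subst hg; simp [hM0]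
    | succ n ih =>
        intro g hg
        rw [pow_succ'] at hg
        obtain ⟨w, hw, g', hg', rfl⟩ := hg
        have hq : (QuotientGroup.mk (w * g') : Γ ⧸ Γ') = QuotientGroup.mk (w * r g') := by
          refine QuotientGroup.eq.mpr ?_
          have := Γ'.inv_mem (hmem g')
          simpa [mul_assoc] using this
        have hrr : r (w * g') = r (w * r g') := by rw [hr]; simp only []; rw [hq]
        have hsplit : γm (w * g') = γm (w * r g') * γm g' := by
          apply Subtype.ext
          push_cast [hγm]
          rw [hrr]
          group
        have h1 : wordLength W' (γm (w * r g')) ≤ M := by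
          have hpmem : (w, (QuotientGroup.mk g' : Γ ⧸ Γ')) ∈
              hWfin.toFinset ×ˢ (Finset.univ : Finset (Γ ⧸ Γ')) := by
            simp [Finset.mem_product, hWfin.mem_toFinset, hw]
          have hle := Finset.le_sup
            (f := fun p : Γ × (Γ ⧸ Γ') => wordLength W' (γm (p.1 * p.2.out))) hpmem
          rw [hM]
          simpa only [hr] using hle
        calc wordLength W' (γm (w * g'))
            = wordLength W' (γm (w * r g') * γm g') := by rw [hsplit]
          _ ≤ wordLength W' (γm (w * r g')) + wordLength W' (γm g') :=
              wordLength_mul_le hW'symm hW'gen _ _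
          _ ≤ M + (M * n + M0) := Nat.add_le_add h1 (ih g' hg')
          _ = M * (n + 1) + M0 := by ring
  -- constants
  obtain ⟨C, hC⟩ := (Set.finite_range fun c : Γ ⧸ Γ' => ‖b c.out‖).bddAbove
  have hCb : ∀ g : Γ, ‖b (r g)‖ ≤ C := fun g => hC (Set.mem_range_self (QuotientGroup.mk g))
  have hC0 : (0 : ℝ) ≤ C := le_trans (norm_nonneg _) (hCb 1)
  set ε' : ℝ := ε / (2 * (M + M0 + 1)) with hε'
  have hε'pos : 0 < ε' := by positivity
  obtain ⟨N', hN'⟩ := hsub' ε' hε'pos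
  obtain ⟨B, hB⟩ := ((set_finite_pow hW'fin N').image fun γ' : Γ' => ‖b ↑γ'‖).bddAbove
  have hB0 : (0 : ℝ) ≤ B := le_trans (norm_nonneg _)
    (hB ⟨(1 : Γ'), Set.one_mem_pow hW'one, rfl⟩)
  refine ⟨⌈2 * (C + B) / ε⌉₊, fun g hg => ?_⟩
  set n : ℕ := wordLength W g with hn
  have hn1 : 1 ≤ n := Nat.lt_of_le_of_lt (Nat.zero_le _) hg
  have hgW : g ∈ W ^ n := wordLength_mem_pow hWsymm hWgen g
  have hkey := key n g hgW
  -- cocycle bound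
  have hbg : ‖b g‖ ≤ C + ‖b ↑(γm g)‖ := by
    calc ‖b g‖ = ‖b (r g * ↑(γm g))‖ := by rw [← hfac]
      _ = ‖b (r g) + π (r g) (b ↑(γm g))‖ := by rw [hbcoc]
      _ ≤ ‖b (r g)‖ + ‖π (r g) (b ↑(γm g))‖ := norm_add_le _ _
      _ = ‖b (r g)‖ + ‖b ↑(γm g)‖ := by rw [LinearIsometryEquiv.norm_map]
      _ ≤ C + ‖b ↑(γm g)‖ := by linarith [hCb g]
  have hNn : 2 * (C + B) / ε < (n : ℝ) := by
    have h1 : (2 * (C + B) / ε) ≤ (⌈2 * (C + B) / ε⌉₊ : ℝ) := Nat.le_ceil _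
    have h2 : ((⌈2 * (C + B) / ε⌉₊ : ℕ) : ℝ) < (n : ℝ) := by exact_mod_cast hg
    linarith
  have hCBn : C + B < ε / 2 * n := by
    have : 2 * (C + B) < ε * n := by
      rw [div_lt_iff₀ hε] at hNn
      linarith [hNn]
    linarith
  by_cases hcase : wordLength W' (γm g) ≤ N'
  · -- short case
    have hmem' : γm g ∈ W' ^ N' :=
      Set.pow_subset_pow_right hW'one hcase (wordLength_mem_pow hW'symm hW'gen (γm g))
    have : ‖b ↑(γm g)‖ ≤ B := hB ⟨γm g, hmem', rfl⟩
    have hn0 : (0 : ℝ) < n := by exact_mod_cast hn1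
    calc ‖b g‖ ≤ C + B := by linarith
      _ < ε / 2 * n := hCBn
      _ ≤ ε * n := by nlinarith
  · -- long case
    push_neg at hcase
    have hlt := hN' (γm g) hcase
    have hwl : (wordLength W' (γm g) : ℝ) ≤ (M + M0 + 1) * n := by
      have h1 : wordLength W' (γm g) ≤ (M + M0 + 1) * n := by
        calc wordLength W' (γm g) ≤ M * n + M0 := hkey
          _ ≤ M * n + M0 * n + n := by nlinarith [hn1]
          _ = (M + M0 + 1) * n := by ring
      exact_mod_cast h1
    have hbγ : ‖b ↑(γm g)‖ < ε / 2 * n := by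
      have hpos : (0 : ℝ) < 2 * (M + M0 + 1) := by positivity
      calc ‖b ↑(γm g)‖ < ε' * wordLength W' (γm g) := hlt
        _ ≤ ε' * ((M + M0 + 1) * n) := by
            apply mul_le_mul_of_nonneg_left hwl (le_of_lt hε'pos)
        _ = ε / 2 * n := by rw [hε']; field_simp
    calc ‖b g‖ ≤ C + ‖b ↑(γm g)‖ := hbg
      _ < C + ε / 2 * n := by linarith
      _ ≤ (C + B) + ε / 2 * n := by linarith
      _ < ε / 2 * n + ε / 2 * n := by linarith [hCBn]
      _ = ε * n := by ring
end

section
/- Let (S, μ) be a probability space, let T : S → S be a measure-preserving map, and let f ∈ L²(S, μ; ℝ). For m ≥ 1 write Sₘf(x) = Σ_{j=0}^{m−1} f(Tʲx) for the Birkhoff sums. If (1/m)·‖Sₘf‖_{L²(μ)} → 0 as m → ∞, then for μ-almost every x ∈ S one has Sₘf(x)/m → 0 as m → ∞. -/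
open MeasureTheory Filter Topology

section Hopf

variable {S : Type*} [MeasurableSpace S] {μ : MeasureTheory.Measure S}

/-- Recursive maximum `max_{0 ≤ n ≤ N} (Birkhoff sum S_n ψ x)`. -/
noncomputable def hopfMax (T : S → S) (ψ : S → ℝ) : ℕ → S → ℝ
  | 0 => fun _ => 0
  | (N + 1) => fun x => max 0 (ψ x + hopfMax T ψ N (T x))

lemma hopfMax_nonneg (T : S → S) (ψ : S → ℝ) (N : ℕ) (x : S) : 0 ≤ hopfMax T ψ N x := by
  cases N with
  | zero => exact le_refl 0
  | succ N => exact le_max_left _ _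

lemma hopfMax_mono (T : S → S) (ψ : S → ℝ) (N : ℕ) (x : S) :
    hopfMax T ψ N x ≤ hopfMax T ψ (N + 1) x := by
  induction N generalizing x with
  | zero => exact hopfMax_nonneg T ψ 1 x
  | succ N ih =>
      exact max_le (le_max_left _ _)
        (le_max_of_le_right (by linarith [ih (T x)]))

lemma hopfMax_monotone (T : S → S) (ψ : S → ℝ) (x : S) :
    Monotone (fun N => hopfMax T ψ N x) :=
  monotone_nat_of_le_succ (fun N => hopfMax_mono T ψ N x)

lemma hopfMax_measurable {T : S → S} {ψ : S → ℝ} (hT : Measurable T) (hψ : Measurable ψ)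
    (N : ℕ) : Measurable (hopfMax T ψ N) := by
  induction N with
  | zero => exact measurable_const
  | succ N ih => exact (measurable_const.max (hψ.add (ih.comp hT)))

lemma hopfMax_integrable {T : S → S} {ψ : S → ℝ} (hT : MeasurePreserving T μ μ)
    (hψm : Measurable ψ) (hψ : Integrable ψ μ) (N : ℕ) :
    Integrable (hopfMax T ψ N) μ := by
  induction N with
  | zero =>
      have : hopfMax T ψ 0 = fun (_ : S) => (0 : ℝ) := rfl
      rw [this]
      exact integrable_zero _ _ _
  | succ N ih =>
      have h1 : Integrable (fun x => ψ x + hopfMax T ψ N (T x)) μ :=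
        hψ.add (hT.integrable_comp (hopfMax_measurable hT.measurable hψm N).aestronglyMeasurable
          |>.mpr ih)
      have h2 := h1.pos_part
      have : hopfMax T ψ (N + 1) = fun x => (ψ x + hopfMax T ψ N (T x)) ⊔ 0 := by
        funext x
        simp [hopfMax, max_comm]
      rw [this]
      exact h2

lemma birkhoffSum_le_hopfMax (T : S → S) (ψ : S → ℝ) :
    ∀ n N : ℕ, n ≤ N → ∀ x, birkhoffSum T ψ n x ≤ hopfMax T ψ N x := by
  intro n
  induction n with
  | zero => intro N _ x; simpa [birkhoffSum] using hopfMax_nonneg T ψ N x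
  | succ n ih =>
      intro N hn x
      obtain ⟨M, rfl⟩ : ∃ M, N = M + 1 := ⟨N - 1, by omega⟩
      rw [birkhoffSum_succ']
      calc ψ x + birkhoffSum T ψ n (T x) ≤ ψ x + hopfMax T ψ M (T x) := by
            linarith [ih M (by omega) (T x)]
        _ ≤ hopfMax T ψ (M + 1) x := le_max_right _ _

/-- Garsia's proof of the Hopf maximal ergodic inequality. -/
lemma hopf_ineq {T : S → S} (hT : MeasurePreserving T μ μ) {ψ : S → ℝ}
    (hψm : Measurable ψ) (hψ : Integrable ψ μ) (N : ℕ) :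
    0 ≤ ∫ x in {x | 0 < hopfMax T ψ N x}, ψ x ∂μ := by
  cases N with
  | zero => simp [hopfMax]
  | succ N =>
    set Φ := hopfMax T ψ (N + 1) with hΦ
    set E : Set S := {x | 0 < Φ x} with hE
    have hEm : MeasurableSet E := measurableSet_lt measurable_const
      (hopfMax_measurable hT.measurable hψm (N + 1))
    have hΦm : Measurable Φ := hopfMax_measurable hT.measurable hψm (N + 1)
    have hΦi : Integrable Φ μ := hopfMax_integrable hT hψm hψ (N + 1)
    have hΦTi : Integrable (fun x => Φ (T x)) μ :=
      (hT.integrable_comp hΦm.aestronglyMeasurable).mpr hΦi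
    -- pointwise on E : Φ x - Φ (T x) ≤ ψ x
    have key : ∀ x ∈ E, Φ x - Φ (T x) ≤ ψ x := by
      intro x hx
      have hpos : (0 : ℝ) < Φ x := hx
      have : Φ x = ψ x + hopfMax T ψ N (T x) := by
        have := hpos
        rw [hΦ] at this ⊢
        simp only [hopfMax] at this ⊢
        rcases max_cases (0 : ℝ) (ψ x + hopfMax T ψ N (T x)) with ⟨h1, h2⟩ | ⟨h1, h2⟩
        · exact absurd (h1 ▸ this) (lt_irrefl 0)
        · exact h1
      have hmono := hopfMax_mono T ψ N (T x)
      rw [this]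
      have : hopfMax T ψ N (T x) ≤ Φ (T x) := hmono
      linarith
    have step1 : ∫ x in E, (Φ x - Φ (T x)) ∂μ ≤ ∫ x in E, ψ x ∂μ :=
      setIntegral_mono_on ((hΦi.sub hΦTi).integrableOn) (hψ.integrableOn) hEm key
    have step2 : ∫ x in E, (Φ x - Φ (T x)) ∂μ = ∫ x in E, Φ x ∂μ - ∫ x in E, Φ (T x) ∂μ :=
      integral_sub hΦi.integrableOn hΦTi.integrableOn
    -- ∫_E Φ = ∫ Φ
    have step3 : ∫ x in E, Φ x ∂μ = ∫ x, Φ x ∂μ := by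
      have hcompl : ∫ x in Eᶜ, Φ x ∂μ = 0 := by
        apply setIntegral_eq_zero_of_forall_eq_zero
        intro x hx
        have h0 : ¬ (0 < Φ x) := hx
        have := hopfMax_nonneg T ψ (N + 1) x
        rw [hΦ]; linarith
      have := integral_add_compl hEm hΦi
      linarith
    have step4 : ∫ x in E, Φ (T x) ∂μ ≤ ∫ x, Φ (T x) ∂μ := by
      apply setIntegral_le_integral hΦTi
      filter_upwards with x using hopfMax_nonneg T ψ (N + 1) (T x)
    have step5 : ∫ x, Φ (T x) ∂μ = ∫ x, Φ x ∂μ := by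
      have := integral_map (μ := μ) hT.measurable.aemeasurable
        (f := Φ) (by rw [hT.map_eq]; exact hΦm.aestronglyMeasurable)
      rw [hT.map_eq] at this
      exact this.symm
    linarith

/-- Maximal ergodic inequality. -/
lemma maximal_ineq {T : S → S} (hT : MeasurePreserving T μ μ) [IsProbabilityMeasure μ]
    {φ : S → ℝ} (hφm : Measurable φ) (hφ : Integrable φ μ) (hφ0 : ∀ x, 0 ≤ φ x)
    {c : ℝ} (hc : 0 < c) :
    μ {x | ∃ n, 0 < n ∧ c * n < birkhoffSum T φ n x} ≤ ENNReal.ofReal ((∫ x, φ x ∂μ) / c) := by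
  set ψ : S → ℝ := fun x => φ x - c with hψdef
  have hψm : Measurable ψ := hφm.sub measurable_const
  have hψi : Integrable ψ μ := hφ.sub (integrable_const c)
  have hSψ : ∀ n x, birkhoffSum T ψ n x = birkhoffSum T φ n x - c * n := by
    intro n x
    simp only [birkhoffSum, hψdef, Finset.sum_sub_distrib, Finset.sum_const,
      Finset.card_range, nsmul_eq_mul]
    ring
  set E : ℕ → Set S := fun N => {x | 0 < hopfMax T ψ N x} with hEdef
  have hEm : ∀ N, MeasurableSet (E N) := fun N =>
    measurableSet_lt measurable_const (hopfMax_measurable hT.measurable hψm N)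
  have hsub : {x | ∃ n, 0 < n ∧ c * n < birkhoffSum T φ n x} ⊆ ⋃ N, E N := by
    rintro x ⟨n, hn, hx⟩
    refine Set.mem_iUnion.2 ⟨n, ?_⟩
    have : 0 < birkhoffSum T ψ n x := by rw [hSψ]; linarith
    exact lt_of_lt_of_le this (birkhoffSum_le_hopfMax T ψ n n le_rfl x)
  have hbound : ∀ N, μ (E N) ≤ ENNReal.ofReal ((∫ x, φ x ∂μ) / c) := by
    intro N
    have h0 := hopf_ineq hT hψm hψi N
    have hint : ∫ x in E N, ψ x ∂μ = (∫ x in E N, φ x ∂μ) - c * (μ (E N)).toReal := by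
      rw [integral_sub hφ.integrableOn (integrable_const c).integrableOn]
      simp [Measure.restrict_apply_univ, mul_comm, measureReal_def]
    have hEfin : μ (E N) ≠ ⊤ := measure_ne_top μ _
    have hEle : ∫ x in E N, φ x ∂μ ≤ ∫ x, φ x ∂μ := by
      apply setIntegral_le_integral hφ
      filter_upwards with x using hφ0 x
    have : c * (μ (E N)).toReal ≤ ∫ x, φ x ∂μ := by
      rw [hint] at h0; linarith
    have hnn : 0 ≤ (∫ x, φ x ∂μ) / c :=
      div_nonneg (integral_nonneg hφ0) hc.le
    rw [ENNReal.le_ofReal_iff_toReal_le hEfin hnn]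
    rw [le_div_iff₀ hc]
    nlinarith [this]
  calc μ {x | ∃ n, 0 < n ∧ c * n < birkhoffSum T φ n x} ≤ μ (⋃ N, E N) := measure_mono hsub
    _ = ⨆ N, μ (E N) := by
        apply Directed.measure_iUnion
        apply Monotone.directed_le
        intro a b hab x hx
        exact lt_of_lt_of_le hx (hopfMax_monotone T ψ x hab)
    _ ≤ ENNReal.ofReal ((∫ x, φ x ∂μ) / c) := iSup_le hbound

end Hopf


section Cobound

variable {S : Type*} [MeasurableSpace S] {μ : MeasureTheory.Measure S}

set_option maxHeartbeats 1000000 in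
lemma coboundary_decay {T : S → S} (hT : MeasurePreserving T μ μ) [IsProbabilityMeasure μ]
    {g : S → ℝ} (hgm : Measurable g) (hg : MemLp g 2 μ) :
    ∀ᵐ x ∂μ, Tendsto (fun m : ℕ => g (T^[m] x) / m) atTop (𝓝 0) := by
  have hg2 : Integrable (fun x => g x ^ 2) μ := by
    have := hg.integrable_sq
    simpa using this
  have key : ∀ j : ℕ, ∀ᵐ x ∂μ, ∀ᶠ m : ℕ in atTop, |g (T^[m] x)| < (1 / (j + 1 : ℝ)) * m := by
    intro j
    set ε : ℝ := 1 / (j + 1 : ℝ) with hε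
    have hεpos : 0 < ε := by positivity
    set s : ℕ → Set S := fun m => T^[m + 1] ⁻¹' {y | ε * (m + 1 : ℕ) ≤ |g y|} with hs
    have hsm : ∀ m : ℝ, MeasurableSet {y : S | ε * m ≤ |g y|} := fun m =>
      measurableSet_le measurable_const hgm.abs
    have hμs : ∀ m : ℕ, μ (s m) = μ {y | ε * (m + 1 : ℕ) ≤ |g y|} := fun m =>
      (hT.iterate (m + 1)).measure_preimage (hsm _).nullMeasurableSet
    have hcheb : ∀ m : ℕ, 0 < m →
        μ {y : S | ε * m ≤ |g y|} ≤ ENNReal.ofReal ((∫ x, g x ^ 2 ∂μ) / (ε * m) ^ 2) := by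
      intro m hm
      have hεm : (0 : ℝ) < ε * m := by positivity
      have hmark := mul_meas_ge_le_integral_of_nonneg
        (f := fun x => g x ^ 2) (by filter_upwards with x using sq_nonneg (g x)) hg2
        ((ε * m) ^ 2)
      have hsub : {y : S | ε * m ≤ |g y|} ⊆ {y : S | (ε * m) ^ 2 ≤ g y ^ 2} := by
        intro y hy
        have : (ε * m) ^ 2 ≤ |g y| ^ 2 := by
          apply pow_le_pow_left₀ hεm.le hy
        simpa [sq_abs] using this
      calc μ {y : S | ε * m ≤ |g y|} ≤ μ {y : S | (ε * m) ^ 2 ≤ g y ^ 2} := measure_mono hsub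
        _ ≤ ENNReal.ofReal ((∫ x, g x ^ 2 ∂μ) / (ε * m) ^ 2) := by
            rw [ENNReal.le_ofReal_iff_toReal_le (measure_ne_top μ _)
              (div_nonneg (integral_nonneg fun x => sq_nonneg _) (by positivity))]
            rw [le_div_iff₀ (by positivity)]
            calc (μ {y : S | (ε * m) ^ 2 ≤ g y ^ 2}).toReal * (ε * m) ^ 2
                = (ε * m) ^ 2 * (μ {y : S | (ε * m) ^ 2 ≤ g y ^ 2}).toReal := by ring
              _ ≤ ∫ x, g x ^ 2 ∂μ := hmark
    have hsum : (∑' m, μ (s m)) ≠ ⊤ := by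
      have hb : ∀ m : ℕ, μ (s m) ≤
          ENNReal.ofReal (((∫ x, g x ^ 2 ∂μ) / ε ^ 2) * (1 / ((m : ℝ) + 1) ^ 2)) := by
        intro m
        rw [hμs]
        refine le_trans (hcheb (m + 1) (Nat.succ_pos m)) (le_of_eq ?_)
        congr 1
        push_cast
        rw [mul_pow, ← div_div]
        ring
      have hsummable : Summable (fun m : ℕ =>
          ((∫ x, g x ^ 2 ∂μ) / ε ^ 2) * (1 / ((m : ℝ) + 1) ^ 2)) := by
        apply Summable.mul_left
        have h1 : Summable (fun n : ℕ => 1 / (n : ℝ) ^ 2) :=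
          Real.summable_one_div_nat_pow.2 one_lt_two
        have := (summable_nat_add_iff 1).2 h1
        simpa using this
      refine ne_top_of_le_ne_top ?_ (ENNReal.tsum_le_tsum hb)
      rw [← ENNReal.ofReal_tsum_of_nonneg (fun m => by positivity) hsummable]
      exact ENNReal.ofReal_ne_top
    filter_upwards [ae_eventually_notMem hsum] with x hx
    rw [eventually_atTop] at hx ⊢
    obtain ⟨N, hN⟩ := hx
    refine ⟨N + 1, fun m hm => ?_⟩
    obtain ⟨k, rfl⟩ : ∃ k, m = k + 1 := ⟨m - 1, by omega⟩
    have : ¬ (ε * ((k : ℕ) + 1 : ℕ) ≤ |g (T^[k + 1] x)|) := hN k (by omega)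
    rw [hε]
    push_cast at this ⊢
    linarith [not_le.1 this]
  rw [← ae_all_iff] at key
  filter_upwards [key] with x hx
  rw [Metric.tendsto_atTop]
  intro δ hδ
  obtain ⟨j, hj⟩ := exists_nat_one_div_lt hδ
  have h1 := hx j
  rw [eventually_atTop] at h1
  obtain ⟨N, hN⟩ := h1
  refine ⟨max N 1, fun m hm => ?_⟩
  have hm1 : 1 ≤ m := le_trans (le_max_right _ _) hm
  have hmpos : (0 : ℝ) < m := by exact_mod_cast hm1
  have h2 := hN m (le_trans (le_max_left _ _) hm)
  rw [Real.dist_eq, sub_zero, abs_div, abs_of_nonneg (by positivity : (0:ℝ) ≤ (m:ℝ))]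
  have hstep : |g (T^[m] x)| / m < 1 / (j + 1 : ℝ) := by
    rw [div_lt_iff₀ hmpos]
    linarith [h2]
  linarith [hstep, hj]

end Cobound


section Closure

variable {S : Type*} [MeasurableSpace S] {μ : MeasureTheory.Measure S}

/-- The Koopman operator on `L²` as a linear map. -/
noncomputable def koopmanL2 {T : S → S} (hT : MeasurePreserving T μ μ) :
    Lp ℝ 2 μ →ₗ[ℝ] Lp ℝ 2 μ where
  toFun := Lp.compMeasurePreserving T hT
  map_add' := map_add _
  map_smul' := by
    intro c G
    apply Lp.ext
    have h1 := Lp.coeFn_compMeasurePreserving (c • G) hT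
    have h2 : (↑↑(c • G) : S → ℝ) =ᵐ[μ] c • (↑↑G : S → ℝ) := Lp.coeFn_smul c G
    have h3 : (↑↑(c • G) : S → ℝ) ∘ T =ᵐ[μ] (c • (↑↑G : S → ℝ)) ∘ T :=
      hT.quasiMeasurePreserving.ae_eq_comp h2
    have h4 : (↑↑(c • Lp.compMeasurePreserving T hT G) : S → ℝ) =ᵐ[μ]
        c • (↑↑(Lp.compMeasurePreserving T hT G) : S → ℝ) := Lp.coeFn_smul c _
    have h5 := Lp.coeFn_compMeasurePreserving G hT
    filter_upwards [h1, h3, h4, h5] with x e1 e3 e4 e5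
    simp only [RingHom.id_apply]
    rw [e1, e4]
    calc ((↑↑(c • G) : S → ℝ) ∘ T) x = ((c • (↑↑G : S → ℝ)) ∘ T) x := e3
      _ = c * (↑↑G : S → ℝ) (T x) := rfl
      _ = c * ((↑↑G : S → ℝ) ∘ T) x := rfl
      _ = c * (↑↑(Lp.compMeasurePreserving T hT G) : S → ℝ) x := by rw [e5]

lemma koopmanL2_apply {T : S → S} (hT : MeasurePreserving T μ μ) (G : Lp ℝ 2 μ) :
    koopmanL2 hT G = Lp.compMeasurePreserving T hT G := rfl

lemma mem_closure_coboundaries {T : S → S} (hT : MeasurePreserving T μ μ)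
    [IsProbabilityMeasure μ] {f : S → ℝ} (hf : MemLp f 2 μ)
    (hL2 : Tendsto
      (fun m : ℕ =>
        (1 / (m : ℝ)) * Real.sqrt (∫ x, (∑ j ∈ Finset.range m, f (T^[j] x)) ^ 2 ∂μ))
      atTop (𝓝 0)) :
    ∀ ε > 0, ∃ G : Lp ℝ 2 μ,
      ‖hf.toLp f - (Lp.compMeasurePreserving T hT G - G)‖ < ε := by
  set f₀ : Lp ℝ 2 μ := hf.toLp f with hf₀
  -- the iterates of f as Lp elements
  set F : ℕ → Lp ℝ 2 μ := fun j =>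
    (hf.comp_measurePreserving (hT.iterate j)).toLp (f ∘ T^[j]) with hF
  have hFcoe : ∀ j, (↑↑(F j) : S → ℝ) =ᵐ[μ] f ∘ T^[j] := fun j => MemLp.coeFn_toLp _
  have hF0 : F 0 = f₀ := by
    apply MemLp.toLp_congr
    apply Filter.EventuallyEq.of_eq
    rw [Function.iterate_zero, Function.comp_id]
  have hFA : ∀ j, koopmanL2 hT (F j) = F (j + 1) := by
    intro j
    rw [koopmanL2_apply, hF]
    simp only
    rw [Lp.toLp_compMeasurePreserving]
    apply MemLp.toLp_congr
    apply Filter.EventuallyEq.of_eq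
    rw [Function.comp_assoc, ← Function.iterate_succ]
  -- the Birkhoff sums as Lp elements
  have hBcoe : ∀ m, (↑↑(∑ j ∈ Finset.range m, F j) : S → ℝ) =ᵐ[μ]
      fun x => ∑ j ∈ Finset.range m, f (T^[j] x) := by
    intro m
    induction m with
    | zero =>
        simp only [Finset.range_zero, Finset.sum_empty]
        exact Lp.coeFn_zero ℝ 2 μ
    | succ m ih =>
        rw [Finset.sum_range_succ]
        filter_upwards [Lp.coeFn_add (∑ j ∈ Finset.range m, F j) (F m), ih, hFcoe m]
          with x e1 e2 e3
        rw [e1]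
        simp only [Pi.add_apply]
        rw [e2, e3]
        rw [Finset.sum_range_succ]
        rfl
  have hnorm : ∀ m : ℕ,
      Real.sqrt (∫ x, (∑ j ∈ Finset.range m, f (T^[j] x)) ^ 2 ∂μ) =
        ‖(∑ j ∈ Finset.range m, F j : Lp ℝ 2 μ)‖ := by
    intro m
    set B : Lp ℝ 2 μ := ∑ j ∈ Finset.range m, F j with hB
    have h1 : (inner ℝ B B : ℝ) = ∫ x, ((↑↑B : S → ℝ) x) * ((↑↑B : S → ℝ) x) ∂μ := by
      rw [L2.inner_def]
      apply integral_congr_ae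
      filter_upwards with x
      simp [RCLike.inner_apply, conj_trivial]
      ring
    have h2 : ∫ x, ((↑↑B : S → ℝ) x) * ((↑↑B : S → ℝ) x) ∂μ =
        ∫ x, (∑ j ∈ Finset.range m, f (T^[j] x)) ^ 2 ∂μ := by
      apply integral_congr_ae
      filter_upwards [hBcoe m] with x hx
      rw [hx]; ring
    have h3 : (inner ℝ B B : ℝ) = ‖B‖ ^ 2 := real_inner_self_eq_norm_sq B
    rw [← h2, ← h1, h3, Real.sqrt_sq (norm_nonneg _)]
  -- the subspace of coboundaries
  set C : Submodule ℝ (Lp ℝ 2 μ) :=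
    LinearMap.range (koopmanL2 hT - LinearMap.id) with hC
  have hmem : f₀ ∈ Cᗮᗮ := by
    rw [Submodule.mem_orthogonal]
    intro h hh
    have eq1 : ∀ G : Lp ℝ 2 μ, (inner ℝ (koopmanL2 hT G) h : ℝ) = inner ℝ G h := by
      intro G
      have h0 : (inner ℝ (koopmanL2 hT G - G) h : ℝ) = 0 := by
        rw [Submodule.mem_orthogonal] at hh
        exact hh _ ⟨G, rfl⟩
      rw [inner_sub_left] at h0
      linarith
    have eqF : ∀ j, (inner ℝ (F j) h : ℝ) = inner ℝ f₀ h := by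
      intro j
      induction j with
      | zero => rw [hF0]
      | succ j ih => rw [← hFA, eq1, ih]
    have hBn : ∀ m : ℕ, (inner ℝ (∑ j ∈ Finset.range m, F j : Lp ℝ 2 μ) h : ℝ) =
        m * inner ℝ f₀ h := by
      intro m
      rw [sum_inner]
      simp only [eqF]
      rw [Finset.sum_const, Finset.card_range, nsmul_eq_mul]
    have hub : ∀ m : ℕ, 1 ≤ m → |(inner ℝ f₀ h : ℝ)| ≤
        ((1 / (m : ℝ)) * ‖(∑ j ∈ Finset.range m, F j : Lp ℝ 2 μ)‖) * ‖h‖ := by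
      intro m hm
      have hmpos : (0 : ℝ) < m := by exact_mod_cast hm
      have h1 : |(m : ℝ) * inner ℝ f₀ h| ≤
          ‖(∑ j ∈ Finset.range m, F j : Lp ℝ 2 μ)‖ * ‖h‖ := by
        rw [← hBn]
        exact abs_real_inner_le_norm _ _
      rw [abs_mul, abs_of_pos hmpos] at h1
      rw [div_mul_eq_mul_div, one_mul, div_mul_eq_mul_div, le_div_iff₀ hmpos]
      nlinarith [h1]
    have hL2' : Tendsto (fun m : ℕ =>
        ((1 / (m : ℝ)) * ‖(∑ j ∈ Finset.range m, F j : Lp ℝ 2 μ)‖) * ‖h‖)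
        atTop (𝓝 0) := by
      have := hL2.mul_const ‖h‖
      rw [zero_mul] at this
      refine this.congr fun m => ?_
      rw [hnorm]
    have habs : |(inner ℝ f₀ h : ℝ)| ≤ 0 := by
      apply ge_of_tendsto hL2'
      filter_upwards [eventually_ge_atTop 1] with m hm using hub m hm
    have : (inner ℝ f₀ h : ℝ) = 0 := abs_nonpos_iff.1 habs
    rw [real_inner_comm] at this
    exact this
  rw [Submodule.orthogonal_orthogonal_eq_closure] at hmem
  intro ε hε
  have hmem' : f₀ ∈ closure (C : Set (Lp ℝ 2 μ)) := by
    rwa [← Submodule.topologicalClosure_coe]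
  obtain ⟨c, hcC, hcd⟩ := Metric.mem_closure_iff.1 hmem' ε hε
  obtain ⟨G, rfl⟩ := hcC
  refine ⟨G, ?_⟩
  have : (koopmanL2 hT - LinearMap.id : Lp ℝ 2 μ →ₗ[ℝ] Lp ℝ 2 μ) G = Lp.compMeasurePreserving T hT G - G := rfl
  rw [this] at hcd
  rwa [← dist_eq_norm]

end Closure
section Main

variable {S : Type*} [MeasurableSpace S] {μ : MeasureTheory.Measure S}

lemma main_aux {T : S → S} (hT : MeasurePreserving T μ μ) [IsProbabilityMeasure μ]
    {f : S → ℝ} (hfm : Measurable f) (hf : MemLp f 2 μ)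
    (hL2 : Tendsto
      (fun m : ℕ =>
        (1 / (m : ℝ)) * Real.sqrt (∫ x, (∑ j ∈ Finset.range m, f (T^[j] x)) ^ 2 ∂μ))
      atTop (𝓝 0)) :
    ∀ᵐ x ∂μ, Tendsto (fun m : ℕ => (∑ j ∈ Finset.range m, f (T^[j] x)) / (m : ℝ))
      atTop (𝓝 0) := by
  have hA : ∀ j : ℕ, μ {x | ¬ ∀ᶠ m : ℕ in atTop,
      |∑ k ∈ Finset.range m, f (T^[k] x)| < (1 / (j + 1 : ℝ)) * m} = 0 := by
    intro j
    set ε : ℝ := 1 / (j + 1 : ℝ) with hεdef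
    have hε : 0 < ε := by positivity
    refine le_antisymm (ENNReal.le_of_forall_pos_le_add fun δ hδ _ => ?_) (by positivity)
    rw [zero_add]
    have hδR : (0 : ℝ) < δ := hδ
    -- pick a coboundary approximation
    obtain ⟨G, hG⟩ := mem_closure_coboundaries hT hf hL2 ((ε / 2) * δ) (by positivity)
    set c : Lp ℝ 2 μ := Lp.compMeasurePreserving T hT G - G with hc
    -- measurable representative of G
    set g' : S → ℝ := (Lp.aestronglyMeasurable G).mk _ with hg'def
    have hg'm : StronglyMeasurable g' := (Lp.aestronglyMeasurable G).stronglyMeasurable_mk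
    have hg'ae : (↑↑G : S → ℝ) =ᵐ[μ] g' := (Lp.aestronglyMeasurable G).ae_eq_mk
    have hg'mem : MemLp g' 2 μ := (Lp.memLp G).ae_eq hg'ae
    set r : S → ℝ := fun x => f x - (g' (T x) - g' x) with hrdef
    have hrm : Measurable r :=
      hfm.sub ((hg'm.measurable.comp hT.measurable).sub hg'm.measurable)
    have hrae : r =ᵐ[μ] (↑↑(hf.toLp f - c) : S → ℝ) := by
      have e1 := Lp.coeFn_sub (hf.toLp f) c
      have e2 := MemLp.coeFn_toLp hf
      have e3 := Lp.coeFn_sub (Lp.compMeasurePreserving T hT G) G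
      have e4 := Lp.coeFn_compMeasurePreserving G hT
      have e5 : (↑↑G : S → ℝ) ∘ T =ᵐ[μ] g' ∘ T :=
        hT.quasiMeasurePreserving.ae_eq_comp hg'ae
      filter_upwards [e1, e2, e3, e4, e5, hg'ae] with x h1 h2 h3 h4 h5 h6
      have h4' : (↑↑(Lp.compMeasurePreserving T hT G) : S → ℝ) x = (↑↑G : S → ℝ) (T x) := h4
      have h5' : (↑↑G : S → ℝ) (T x) = g' (T x) := h5
      rw [hrdef]
      simp only [h1, Pi.sub_apply, h2, h3, h4', h5', h6]
      rw [hc, h3]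
      simp only [Pi.sub_apply, h4', h5', h6]
    have hr2 : MemLp r 2 μ := (Lp.memLp (hf.toLp f - c)).ae_eq hrae.symm
    set φ : S → ℝ := fun x => |r x| with hφdef
    have hφm : Measurable φ := hrm.abs
    have hφi : Integrable φ μ :=
      (memLp_one_iff_integrable.1 (hr2.mono_exponent one_le_two)).abs
    have hφ0 : ∀ x, 0 ≤ φ x := fun x => abs_nonneg _
    -- ∫ φ ≤ ‖f₀ - c‖
    have hφle : ∫ x, φ x ∂μ ≤ (ε / 2) * δ := by
      have h1 : ∫ x, φ x ∂μ = (eLpNorm r 1 μ).toReal := by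
        rw [hφdef]
        simp only [← Real.norm_eq_abs]
        rw [integral_norm_eq_lintegral_enorm hrm.aestronglyMeasurable,
          eLpNorm_one_eq_lintegral_enorm]
      have h2 : eLpNorm r 1 μ ≤ eLpNorm r 2 μ :=
        eLpNorm_le_eLpNorm_of_exponent_le one_le_two hrm.aestronglyMeasurable
      have h3 : eLpNorm r 2 μ = eLpNorm (↑↑(hf.toLp f - c) : S → ℝ) 2 μ :=
        eLpNorm_congr_ae hrae
      have h4 : ‖hf.toLp f - c‖ = (eLpNorm (↑↑(hf.toLp f - c) : S → ℝ) 2 μ).toReal :=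
        Lp.norm_def _
      have h5 : eLpNorm (↑↑(hf.toLp f - c) : S → ℝ) 2 μ ≠ ⊤ :=
        (Lp.eLpNorm_lt_top _).ne
      have h6 : (eLpNorm r 1 μ).toReal ≤ ‖hf.toLp f - c‖ := by
        rw [h4]
        exact ENNReal.toReal_mono h5 (h2.trans h3.le)
      rw [h1]
      exact h6.trans hG.le
    set B : Set S := {x | ∃ n, 0 < n ∧ (ε / 2) * n < birkhoffSum T φ n x} with hBdef
    have hμB : μ B ≤ (δ : ENNReal) := by
      refine le_trans (maximal_ineq hT hφm hφi hφ0 (by positivity : (0:ℝ) < ε / 2)) ?_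
      have : (∫ x, φ x ∂μ) / (ε / 2) ≤ (δ : ℝ) := by
        rw [div_le_iff₀ (by positivity : (0:ℝ) < ε / 2)]
        linarith [hφle]
      calc ENNReal.ofReal ((∫ x, φ x ∂μ) / (ε / 2)) ≤ ENNReal.ofReal (δ : ℝ) :=
            ENNReal.ofReal_le_ofReal this
        _ = (δ : ENNReal) := ENNReal.ofReal_coe_nnreal
    have hdecay := coboundary_decay hT hg'm.measurable hg'mem
    -- inclusion
    have hincl : {x | ¬ ∀ᶠ m : ℕ in atTop,
        |∑ k ∈ Finset.range m, f (T^[k] x)| < ε * m} ⊆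
        B ∪ {x | ¬ Tendsto (fun m : ℕ => g' (T^[m] x) / m) atTop (𝓝 0)} := by
      intro x hx
      by_contra hmem
      rw [Set.mem_union] at hmem
      push_neg at hmem
      obtain ⟨hxB, hxN⟩ := hmem
      have htd : Tendsto (fun m : ℕ => g' (T^[m] x) / m) atTop (𝓝 0) := not_not.1 hxN
      have hxB' : ∀ n, 0 < n → birkhoffSum T φ n x ≤ (ε / 2) * n := by
        intro n hn
        by_contra hcon
        exact hxB ⟨n, hn, lt_of_not_ge hcon⟩
      apply hx
      -- eventual bounds
      have hev1 : ∀ᶠ m : ℕ in atTop, |g' (T^[m] x)| < (ε / 4) * m := by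
        have h := Metric.tendsto_atTop.1 htd (ε / 4) (by positivity)
        obtain ⟨N, hN⟩ := h
        rw [eventually_atTop]
        refine ⟨max N 1, fun m hm => ?_⟩
        have hm1 : 1 ≤ m := le_trans (le_max_right _ _) hm
        have hmpos : (0 : ℝ) < m := by exact_mod_cast hm1
        have := hN m (le_trans (le_max_left _ _) hm)
        rw [Real.dist_eq, sub_zero, abs_div, abs_of_pos hmpos, div_lt_iff₀ hmpos] at this
        linarith [this]
      have hev2 : ∀ᶠ m : ℕ in atTop, |g' x| < (ε / 4) * m := by
        obtain ⟨M, hM⟩ := exists_nat_gt (|g' x| / (ε / 4))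
        rw [eventually_atTop]
        refine ⟨M, fun m hm => ?_⟩
        have hMm : (M : ℝ) ≤ m := by exact_mod_cast hm
        have : |g' x| < (ε / 4) * M := by
          rw [div_lt_iff₀ (by positivity : (0:ℝ) < ε / 4)] at hM
          linarith [hM]
        nlinarith [this, hMm]
      filter_upwards [hev1, hev2, eventually_ge_atTop 1] with m h1 h2 h3
      have hmpos : (0 : ℝ) < m := by exact_mod_cast h3
      -- decomposition
      have hdecomp : ∑ k ∈ Finset.range m, f (T^[k] x) =
          birkhoffSum T r m x + (g' (T^[m] x) - g' x) := by
        have htel : ∑ i ∈ Finset.range m, (g' (T^[i + 1] x) - g' (T^[i] x)) =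
            g' (T^[m] x) - g' (T^[0] x) := Finset.sum_range_sub (fun i => g' (T^[i] x)) m
        have : birkhoffSum T r m x = (∑ k ∈ Finset.range m, f (T^[k] x)) -
            ∑ i ∈ Finset.range m, (g' (T^[i + 1] x) - g' (T^[i] x)) := by
          rw [birkhoffSum, ← Finset.sum_sub_distrib]
          apply Finset.sum_congr rfl
          intro i _
          rw [hrdef]
          simp only [Function.iterate_succ_apply']
        rw [this, htel]
        simp only [Function.iterate_zero_apply]
        ring
      have habs : |birkhoffSum T r m x| ≤ birkhoffSum T φ m x := by
        rw [birkhoffSum, birkhoffSum, hφdef]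
        exact Finset.abs_sum_le_sum_abs _ _
      have hb := hxB' m h3
      rw [hdecomp]
      calc |birkhoffSum T r m x + (g' (T^[m] x) - g' x)|
          ≤ |birkhoffSum T r m x| + |g' (T^[m] x)| + |g' x| := by
            have := abs_add_le (birkhoffSum T r m x) (g' (T^[m] x) - g' x)
            have h4 := abs_sub (g' (T^[m] x)) (g' x)
            calc |birkhoffSum T r m x + (g' (T^[m] x) - g' x)|
                ≤ |birkhoffSum T r m x| + |g' (T^[m] x) - g' x| := abs_add_le _ _
              _ ≤ |birkhoffSum T r m x| + (|g' (T^[m] x)| + |g' x|) := by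
                  have := abs_sub_abs_le_abs_sub (g' (T^[m] x)) (g' x)
                  have h5 : |g' (T^[m] x) - g' x| ≤ |g' (T^[m] x)| + |g' x| :=
                    abs_sub _ _
                  linarith
              _ = |birkhoffSum T r m x| + |g' (T^[m] x)| + |g' x| := by ring
        _ < ε * m := by
            have := habs.trans hb
            linarith [h1, h2, this]
    calc μ {x | ¬ ∀ᶠ m : ℕ in atTop, |∑ k ∈ Finset.range m, f (T^[k] x)| < ε * m}
        ≤ μ (B ∪ {x | ¬ Tendsto (fun m : ℕ => g' (T^[m] x) / m) atTop (𝓝 0)}) :=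
          measure_mono hincl
      _ ≤ μ B + μ {x | ¬ Tendsto (fun m : ℕ => g' (T^[m] x) / m) atTop (𝓝 0)} :=
          measure_union_le _ _
      _ ≤ (δ : ENNReal) + 0 := add_le_add hμB (le_of_eq (ae_iff.1 hdecay))
      _ = (δ : ENNReal) := by rw [add_zero]
  -- combine over j
  have hall : ∀ᵐ x ∂μ, ∀ j : ℕ, ∀ᶠ m : ℕ in atTop,
      |∑ k ∈ Finset.range m, f (T^[k] x)| < (1 / (j + 1 : ℝ)) * m := by
    rw [ae_all_iff]
    intro j
    rw [ae_iff]
    exact hA j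
  filter_upwards [hall] with x hx
  rw [Metric.tendsto_atTop]
  intro δ hδ
  obtain ⟨j, hj⟩ := exists_nat_one_div_lt hδ
  obtain ⟨N, hN⟩ := eventually_atTop.1 (hx j)
  refine ⟨max N 1, fun m hm => ?_⟩
  have hm1 : 1 ≤ m := le_trans (le_max_right _ _) hm
  have hmpos : (0 : ℝ) < m := by exact_mod_cast hm1
  have h2 := hN m (le_trans (le_max_left _ _) hm)
  rw [Real.dist_eq, sub_zero, abs_div, abs_of_pos hmpos, div_lt_iff₀ hmpos]
  calc |∑ k ∈ Finset.range m, f (T^[k] x)| < (1 / (j + 1 : ℝ)) * m := h2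
    _ ≤ δ * m := by nlinarith [hj, hmpos]

end Main

/-- If the `L²`-norms of the Birkhoff sums `Sₘ f` of an `L²` function `f` over a
measure-preserving map `T` of a probability space are `o(m)`, then almost everywhere
`Sₘ f (x) / m → 0`. -/
theorem birkhoff_ae_of_L2_sublinear
    {S : Type*} [MeasurableSpace S] (μ : Measure S) [IsProbabilityMeasure μ]
    (T : S → S) (hT : MeasurePreserving T μ μ)
    (f : S → ℝ) (hf : MemLp f 2 μ)
    (hL2 : Tendsto
      (fun m : ℕ =>
        (1 / (m : ℝ)) * Real.sqrt (∫ x, (∑ j ∈ Finset.range m, f (T^[j] x)) ^ 2 ∂μ))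
      atTop (𝓝 0)) :
    ∀ᵐ x ∂μ, Tendsto (fun m : ℕ => (∑ j ∈ Finset.range m, f (T^[j] x)) / (m : ℝ))
      atTop (𝓝 0) := by
  set f' : S → ℝ := hf.aestronglyMeasurable.mk f with hf'def
  have hf'm : StronglyMeasurable f' := hf.aestronglyMeasurable.stronglyMeasurable_mk
  have hae : f =ᵐ[μ] f' := hf.aestronglyMeasurable.ae_eq_mk
  have hf' : MemLp f' 2 μ := hf.ae_eq hae
  have hSae : ∀ᵐ x ∂μ, ∀ j : ℕ, f (T^[j] x) = f' (T^[j] x) := by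
    rw [ae_all_iff]
    intro j
    exact (hT.iterate j).quasiMeasurePreserving.ae_eq_comp hae
  have hL2' : Tendsto
      (fun m : ℕ =>
        (1 / (m : ℝ)) * Real.sqrt (∫ x, (∑ j ∈ Finset.range m, f' (T^[j] x)) ^ 2 ∂μ))
      atTop (𝓝 0) := by
    refine hL2.congr fun m => ?_
    congr 1
    congr 1
    apply integral_congr_ae
    filter_upwards [hSae] with x hx
    congr 1
    exact Finset.sum_congr rfl fun j _ => hx j
  have hmain := main_aux hT hf'm.measurable hf' hL2'
  filter_upwards [hmain, hSae] with x h1 h2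
  refine h1.congr fun m => ?_
  congr 1
  exact (Finset.sum_congr rfl fun j _ => (h2 j).symm)
end
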